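/- For every Hausdorff ℵ₁-tree 𝐓 = (T, <_T) there exist a binary ℵ₁-tree S and a closed unbounded set D ⊆ ω₁ such that the suborders (⋃_{α∈D} T_α, <_T) and (⋃_{α∈D} S_α, ⊊) are order-isomorphic. -/

import Mathlib

noncomputable section

open Cardinal Set

/-- The first uncountable ordinal `ω₁`. -/
def omega1 : Ordinal := (Cardinal.aleph 1).ord

/-- A transfinite binary sequence: a function `t : α → 2` for some ordinal `α`. -/
abbrev BinSeq : Type 1 := Σ α : Ordinal, (Set.Iio α → Bool)

namespace BinSeq

/-- The restriction `t ↾ β` of a binary sequence `t` to an initial segment of its domain. -/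
def restrict (t : BinSeq) (β : Ordinal) (h : β ≤ t.1) : BinSeq :=
  ⟨β, fun x => t.2 ⟨x.1, lt_of_lt_of_le x.2 h⟩⟩

/-- `s.sub t`: `s` is an initial segment of `t` (that is, `s ⊆ t`). -/
def sub (s t : BinSeq) : Prop := ∃ h : s.1 ≤ t.1, t.restrict s.1 h = s

/-- `s.ssub t`: `s` is a proper initial segment of `t` (that is, `s ⊊ t`). -/
def ssub (s t : BinSeq) : Prop := ∃ h : s.1 < t.1, t.restrict s.1 h.le = s

end BinSeq

/-- A candidate branch: a function `f : ω₁ → 2`. -/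
abbrev BinBranch : Type 1 := Set.Iio omega1 → Bool

/-- The restriction `f ↾ α` of `f : ω₁ → 2` to an ordinal `α < ω₁`. -/
def BinBranch.restrict (f : BinBranch) (α : Ordinal) (h : α < omega1) : BinSeq :=
  ⟨α, fun x => f ⟨x.1, lt_trans x.2 h⟩⟩

/-- `C` is a closed unbounded (club) subset of `ω₁`: it is a set of countable ordinals,
unbounded in `ω₁`, and closed under suprema of bounded nonempty subsets. -/
def IsClubBelow (C : Set Ordinal) : Prop :=
  C ⊆ Set.Iio omega1 ∧
  (∀ β < omega1, ∃ α ∈ C, β < α) ∧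
  (∀ s : Set Ordinal, s ⊆ C → s.Nonempty → sSup s < omega1 → sSup s ∈ C)

/-- `S` is a stationary subset of `ω₁`: it meets every club subset of `ω₁`. -/
def IsStationaryBelow (S : Set Ordinal) : Prop :=
  ∀ C : Set Ordinal, IsClubBelow C → (S ∩ C).Nonempty

/-- `T` is a binary ℵ₁-tree: a downward closed family of binary sequences of
countable length, all of whose levels are countable. -/
structure IsBinaryAleph1Tree (T : Set BinSeq) : Prop where
  dom_lt : ∀ t ∈ T, t.1 < omega1
  downward_closed : ∀ t ∈ T, ∀ β, ∀ h : β ≤ t.1, t.restrict β h ∈ T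
  countable_levels : ∀ α < omega1, {t | t ∈ T ∧ t.1 = α}.Countable

/-- The set of cofinal branches of a binary tree:
functions `f : ω₁ → 2` all of whose initial segments lie in `T`. -/
def BinBranches (T : Set BinSeq) : Set BinBranch :=
  {f | ∀ α, ∀ h : α < omega1, f.restrict α h ∈ T}

/-- A binary Kurepa tree: a binary ℵ₁-tree with at least ℵ₂-many cofinal branches. -/
def IsBinaryKurepa (T : Set BinSeq) : Prop :=
  IsBinaryAleph1Tree T ∧ Cardinal.aleph 2 ≤ #(↥(BinBranches T))

/-- `◇(T)` for a binary tree `T`: there is a transversal `⟨t_α | α < ω₁⟩` with `t_α ∈ T_α`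
such that for every cofinal branch `f` of `T`, the set `{α < ω₁ | f ↾ α = t_α}` is stationary. -/
def BinDiamond (T : Set BinSeq) : Prop :=
  ∃ t : Ordinal → BinSeq,
    (∀ α < omega1, t α ∈ T ∧ (t α).1 = α) ∧
    ∀ f ∈ BinBranches T,
      IsStationaryBelow {α | ∃ h : α < omega1, BinBranch.restrict f α h = t α}

/-- An abstract tree: a strict partial order in which the set of predecessors
of every point is well-ordered. -/
structure OTree where
  carrier : Type
  lt : carrier → carrier → Prop
  lt_trans : ∀ {x y z}, lt x y → lt y z → lt x z
  lt_irrefl : ∀ x, ¬ lt x x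
  pred_wellOrder : ∀ x, IsWellOrder {y // lt y x} fun a b => lt a.1 b.1

namespace OTree

/-- The height of a node: the order type of its set of predecessors. -/
def height (t : OTree) (x : t.carrier) : Ordinal :=
  @Ordinal.type {y // t.lt y x} (fun a b => t.lt a.1 b.1) (t.pred_wellOrder x)

/-- The `α`-th level of the tree. -/
def level (t : OTree) (α : Ordinal) : Set t.carrier := {x | t.height x = α}

/-- An ℵ₁-tree: a tree of height `ω₁` all of whose levels are countable. -/
def IsAleph1Tree (t : OTree) : Prop :=
  (∀ x, t.height x < omega1) ∧
  (∀ α < omega1, (t.level α).Nonempty) ∧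
  (∀ α < omega1, (t.level α).Countable)

/-- A tree is Hausdorff if nodes of the same limit height
with the same predecessors are equal. -/
def Hausdorff (t : OTree) : Prop :=
  ∀ x y : t.carrier, Order.IsSuccLimit (t.height x) → t.height x = t.height y →
    {z | t.lt z x} = {z | t.lt z y} → x = y

/-- The set of cofinal branches: uncountable maximal chains. -/
def branches (t : OTree) : Set (Set t.carrier) :=
  {C | IsMaxChain t.lt C ∧ ¬ C.Countable}

/-- A Kurepa tree: an ℵ₁-tree with at least ℵ₂-many cofinal branches. -/
def IsKurepa (t : OTree) : Prop :=
  t.IsAleph1Tree ∧ Cardinal.aleph 2 ≤ #(↥t.branches)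

/-- `◇(𝐓)`: there is a transversal `⟨b_α | α < ω₁⟩` with `b_α ∈ T_α` such that for every
cofinal branch `f`, the set `{α < ω₁ | f ↾ α = b_α}` (i.e. the set of `α < ω₁` such that
`b_α` is the unique element of `f` on the `α`-th level) is stationary. -/
def Diamond (t : OTree) : Prop :=
  ∃ b : Ordinal → t.carrier,
    (∀ α < omega1, b α ∈ t.level α) ∧
    ∀ f ∈ t.branches,
      IsStationaryBelow {α | α < omega1 ∧ f ∩ t.level α = {b α}}

/-- A tree has height `ω₁` if every node has countable height
and every countable level is nonempty. -/
def HasHeightOmega1 (t : OTree) : Prop :=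
  (∀ x, t.height x < omega1) ∧ ∀ α < omega1, (t.level α).Nonempty

end OTree

namespace St0

open Ordinal

variable (t : OTree)

/-- The canonical well-order on the predecessors of `x`. -/
abbrev rel (x : t.carrier) : {y // t.lt y x} → {y // t.lt y x} → Prop :=
  fun a b => t.lt a.1 b.1

theorem height_eq_typein (x : t.carrier) (z : {y // t.lt y x}) :
    t.height z.1 = @Ordinal.typein _ (rel t x) (t.pred_wellOrder x) z := by
  letI := t.pred_wellOrder x
  letI := t.pred_wellOrder z.1
  rw [← Ordinal.type_subrel]
  exact RelIso.ordinal_type_eq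
    ⟨⟨fun w => ⟨⟨w.1, t.lt_trans w.2 z.2⟩, w.2⟩, fun b => ⟨b.1.1, b.2⟩,
      fun w => rfl, fun b => rfl⟩, Iff.rfl⟩

theorem height_lt {z x : t.carrier} (h : t.lt z x) : t.height z < t.height x := by
  letI := t.pred_wellOrder x
  rw [height_eq_typein t x ⟨z, h⟩]
  exact Ordinal.typein_lt_type _ _

/-- The predecessor of `x` at level `β` (equal to `x` itself if `β = height x`). -/
noncomputable def pr (x : t.carrier) (β : Ordinal) : t.carrier :=
  letI := t.pred_wellOrder x
  if h : β < t.height x then (Ordinal.enum (rel t x) ⟨β, h⟩).1 else x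

theorem pr_lt {x : t.carrier} {β : Ordinal} (h : β < t.height x) : t.lt (pr t x β) x := by
  letI := t.pred_wellOrder x
  rw [pr, dif_pos h]
  exact (Ordinal.enum (rel t x) ⟨β, h⟩).2

theorem pr_self (x : t.carrier) : pr t x (t.height x) = x :=
  dif_neg (lt_irrefl _)

theorem height_pr {x : t.carrier} {β : Ordinal} (h : β ≤ t.height x) :
    t.height (pr t x β) = β := by
  letI := t.pred_wellOrder x
  rcases lt_or_eq_of_le h with h' | h'
  · rw [pr, dif_pos h']
    rw [height_eq_typein t x (Ordinal.enum (rel t x) ⟨β, h'⟩)]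
    exact Ordinal.typein_enum _ _
  · rw [h', pr_self]

theorem pr_of_lt {z x : t.carrier} (h : t.lt z x) : pr t x (t.height z) = z := by
  letI := t.pred_wellOrder x
  have hlt : t.height z < t.height x := height_lt t h
  rw [pr, dif_pos hlt]
  have h2 : (⟨t.height z, hlt⟩ : Set.Iio (Ordinal.type (rel t x))) =
      ⟨Ordinal.typein (rel t x) ⟨z, h⟩, Ordinal.typein_lt_type _ _⟩ :=
    Subtype.ext (height_eq_typein t x ⟨z, h⟩)
  rw [h2, Ordinal.enum_typein]

theorem eq_of_height_eq {u v x : t.carrier} (hu : t.lt u x) (hv : t.lt v x)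
    (h : t.height u = t.height v) : u = v := by
  have h1 := pr_of_lt t hu
  rw [h, pr_of_lt t hv] at h1
  exact h1.symm

theorem pr_eq_of_lt {x y : t.carrier} (hxy : t.lt x y) {β : Ordinal} (hβ : β ≤ t.height x) :
    pr t x β = pr t y β := by
  have hβy : β < t.height y := lt_of_le_of_lt hβ (height_lt t hxy)
  have h1 : t.lt (pr t x β) y := by
    rcases lt_or_eq_of_le hβ with h' | h'
    · exact t.lt_trans (pr_lt t h') hxy
    · rw [h', pr_self]; exact hxy
  exact eq_of_height_eq t h1 (pr_lt t hβy)
    (by rw [height_pr t hβ, height_pr t (le_of_lt hβy)])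

theorem pr_pr {x : t.carrier} {β δ : Ordinal} (hβ : β ≤ t.height x) (hδ : δ ≤ β) :
    pr t (pr t x β) δ = pr t x δ := by
  rcases lt_or_eq_of_le hβ with h' | h'
  · exact pr_eq_of_lt t (pr_lt t h') (by rw [height_pr t hβ]; exact hδ)
  · rw [h', pr_self]

-- An injection of each level into `ℕ`.
open scoped Classical in
noncomputable def levInj (α : Ordinal) : ↥(t.level α) → ℕ :=
  if h : (t.level α).Countable then
    Classical.choose (@Countable.exists_injective_nat _ h.to_subtype)
  else fun _ => 0

theorem levInj_injective {α : Ordinal} (h : (t.level α).Countable) :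
    Function.Injective (levInj t α) := by
  rw [levInj, dif_pos h]
  exact Classical.choose_spec (@Countable.exists_injective_nat _ h.to_subtype)

/-- Numbering of nodes, injective on each (countable) level. -/
noncomputable def num (x : t.carrier) : ℕ :=
  levInj t (t.height x) ⟨x, rfl⟩

theorem levInj_congr {α β : Ordinal} (h : α = β) (x : t.carrier) (hx : x ∈ t.level α)
    (hx' : x ∈ t.level β) : levInj t α ⟨x, hx⟩ = levInj t β ⟨x, hx'⟩ := by
  subst h; rfl

theorem num_inj {x y : t.carrier} (hc : (t.level (t.height x)).Countable)
    (hh : t.height x = t.height y) (hn : num t x = num t y) : x = y := by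
  have hy : y ∈ t.level (t.height x) := hh.symm
  have h2 : num t y = levInj t (t.height x) ⟨y, hy⟩ :=
    (levInj_congr t hh.symm y rfl hy).symm ▸ rfl
  rw [num, h2] at hn
  have := levInj_injective t hc hn
  exact congrArg Subtype.val this

/-- The bit of the code of `z` at position `γ`. -/
noncomputable def bitf (z : t.carrier) (γ : Ordinal) : Bool :=
  @ite _ (γ % omega0 = (num t (pr t z (γ / omega0)) : Ordinal)) (Classical.dec _) true false

theorem bitf_eq_true_iff {z : t.carrier} {γ : Ordinal} :
    bitf t z γ = true ↔ γ % omega0 = (num t (pr t z (γ / omega0)) : Ordinal) := by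
  rw [bitf]
  split_ifs with h
  · simp [h]
  · simp [h]

/-- The binary sequence of length `γ` coding the predecessors of `z`. -/
noncomputable def Phi (z : t.carrier) (γ : Ordinal) : BinSeq :=
  ⟨γ, fun p => bitf t z p.1⟩

theorem Phi_fst (z : t.carrier) (γ : Ordinal) : (Phi t z γ).1 = γ := rfl

theorem restrict_Phi (z : t.carrier) {β γ : Ordinal} (h : β ≤ γ) :
    (Phi t z γ).restrict β h = Phi t z β := rfl

theorem Phi_congr {z w : t.carrier} {γ : Ordinal}
    (h : ∀ γ' < γ, pr t z (γ' / omega0) = pr t w (γ' / omega0)) :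
    Phi t z γ = Phi t w γ := by
  rw [Phi, Phi]
  congr 1
  funext p
  rw [bitf, bitf, h p.1 p.2]

theorem Phi_bit_eq {z w : t.carrier} {γ γ' : Ordinal} (h : Phi t z γ = Phi t w γ)
    (hγ' : γ' < γ) : bitf t z γ' = bitf t w γ' := by
  have h2 : HEq (Phi t z γ).2 (Phi t w γ).2 := by rw [h]
  have h3 : (Phi t z γ).2 = (Phi t w γ).2 := eq_of_heq h2
  exact congrFun h3 ⟨γ', Set.mem_Iio.mpr hγ'⟩

/-- Decoding: equal codes give equal predecessors. -/
theorem pred_decode {z w : t.carrier} {δ γ : Ordinal}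
    (h : Phi t z γ = Phi t w γ) (hδz : δ ≤ t.height z) (hδw : δ ≤ t.height w)
    (hγ : omega0 * δ + (num t (pr t z δ) : Ordinal) < γ)
    (hc : (t.level δ).Countable) :
    pr t z δ = pr t w δ := by
  set n : Ordinal := (num t (pr t z δ) : Ordinal) with hn
  have hnlt : n < omega0 := nat_lt_omega0 _
  have hdiv : (omega0 * δ + n) / omega0 = δ := by
    rw [Ordinal.mul_add_div _ omega0_ne_zero, Ordinal.div_eq_zero_of_lt hnlt, add_zero]
  have hmod : (omega0 * δ + n) % omega0 = n := by
    rw [Ordinal.mul_add_mod_self, Ordinal.mod_eq_of_lt hnlt]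
  have hbz : bitf t z (omega0 * δ + n) = true := by
    rw [bitf_eq_true_iff, hdiv, hmod]
  have hbw := Phi_bit_eq t h hγ
  rw [hbz] at hbw
  rw [eq_comm, bitf_eq_true_iff, hdiv, hmod] at hbw
  have hnum : num t (pr t z δ) = num t (pr t w δ) :=
    Nat.cast_injective hbw
  have hhz : t.height (pr t z δ) = δ := height_pr t hδz
  have hhw : t.height (pr t w δ) = δ := height_pr t hδw
  exact num_inj t (by rwa [hhz]) (by rw [hhz, hhw]) hnum

theorem div_mono {a b c : Ordinal} (hc : c ≠ 0) (h : a ≤ b) : a / c ≤ b / c := by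
  rw [Ordinal.div_le hc]
  exact lt_of_le_of_lt h (Ordinal.lt_mul_succ_div b hc)

theorem div_omega0_le (γ : Ordinal) : γ / omega0 ≤ γ := by
  rw [Ordinal.div_le omega0_ne_zero]
  exact lt_of_lt_of_le (Order.lt_succ γ) (Ordinal.le_mul_right _ omega0_pos)

theorem omega0_mul_lt {α : Ordinal} (h : α < omega1) : omega0 * α < omega1 := by
  rw [omega1, Cardinal.lt_ord] at h ⊢
  rw [Ordinal.card_mul, Ordinal.card_omega0]
  have hα : α.card ≤ Cardinal.aleph0 := by
    rwa [← Cardinal.succ_aleph0, Order.lt_succ_iff] at h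
  calc Cardinal.aleph0 * α.card ≤ Cardinal.aleph0 * Cardinal.aleph0 :=
        mul_le_mul_right hα _
    _ = Cardinal.aleph0 := Cardinal.aleph0_mul_aleph0
    _ < Cardinal.aleph 1 := Cardinal.aleph0_lt_aleph_one

end St0


/-- For every Hausdorff ℵ₁-tree `𝐓 = (T, <_T)` there exist a binary ℵ₁-tree `S`
and a club `D ⊆ ω₁` such that `(⋃_{α ∈ D} T_α, <_T)` and `(⋃_{α ∈ D} S_α, ⊊)`
are order-isomorphic. -/
theorem statement0 (t : OTree) (h1 : t.IsAleph1Tree) (h2 : t.Hausdorff) :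
    ∃ S : Set BinSeq, IsBinaryAleph1Tree S ∧
      ∃ D : Set Ordinal, IsClubBelow D ∧
        ∃ e : {x : t.carrier // t.height x ∈ D} ≃ {s : BinSeq // s ∈ S ∧ s.1 ∈ D},
          ∀ x y, t.lt x.1 y.1 ↔ BinSeq.ssub (e x).1 (e y).1 := by
  classical
  open St0 Ordinal in
  obtain ⟨hht, hne, hcount⟩ := h1
  set S : Set BinSeq :=
    {s | ∃ (z : t.carrier) (γ : Ordinal), γ ≤ omega0 * t.height z ∧ s = Phi t z γ} with hSdef
  set D : Set Ordinal := {α | α < omega1 ∧ 0 < α ∧ omega0 * α = α} with hDdef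
  have hDlim : ∀ α ∈ D, Order.IsSuccLimit α := by
    intro α hα
    have h3 : Order.IsSuccLimit (omega0 * α) := isSuccLimit_mul_left isSuccLimit_omega0 hα.2.1
    rwa [hα.2.2] at h3
  -- the binary tree
  have hTree : IsBinaryAleph1Tree S := by
    constructor
    · rintro s ⟨z, γ, hγ, rfl⟩
      exact lt_of_le_of_lt hγ (omega0_mul_lt (hht z))
    · rintro s ⟨z, γ, hγ, rfl⟩ β hβ
      exact ⟨z, β, le_trans hβ hγ, (restrict_Phi t z hβ).symm⟩
    · intro α hα
      have hsub : {s | s ∈ S ∧ s.1 = α} ⊆ (fun z => Phi t z α) '' (t.level (α / omega0)) := by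
        rintro s ⟨⟨z, γ, hγ, rfl⟩, hdom⟩
        have hγα : γ = α := hdom
        subst hγα
        have hβz : γ / omega0 ≤ t.height z := by
          have h4 := div_mono omega0_ne_zero hγ
          rwa [Ordinal.mul_div_cancel _ omega0_ne_zero] at h4
        refine ⟨pr t z (γ / omega0), height_pr t hβz, ?_⟩
        apply Phi_congr
        intro γ' hγ'
        exact pr_pr t hβz (div_mono omega0_ne_zero hγ'.le)
      exact Set.Countable.mono hsub
        (Set.Countable.image (hcount _ (lt_of_le_of_lt (div_omega0_le α) hα)) _)
  -- the club
  have hClub : IsClubBelow D := by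
    refine ⟨fun α hα => hα.1, ?_, ?_⟩
    · intro β hβ
      have hlim1 : Order.IsSuccLimit omega1 := Cardinal.isSuccLimit_ord Cardinal.aleph0_lt_aleph_one.le
      set α := Ordinal.nfp (omega0 * ·) (Order.succ β) with hαdef
      have h3 : Order.succ β ≤ α := Ordinal.le_nfp _ _
      have hfix : omega0 * α = α := Ordinal.nfp_fp (isNormal_mul_right omega0_pos) _
      have hα1 : α < omega1 := by
        apply Ordinal.nfp_lt_ord
        · show Cardinal.aleph0 < ((Cardinal.aleph 1).ord).cof
          rw [Cardinal.isRegular_aleph_one.cof_eq]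
          exact Cardinal.aleph0_lt_aleph_one
        · exact fun i hi => omega0_mul_lt hi
        · exact hlim1.succ_lt hβ
      refine ⟨α, ⟨hα1, ?_, hfix⟩, lt_of_lt_of_le (Order.lt_succ β) h3⟩
      exact lt_of_le_of_lt (zero_le) (lt_of_lt_of_le (Order.lt_succ β) h3)
    · intro s hsD hsne hsup
      have hbdd : BddAbove s := ⟨omega1, fun a ha => le_of_lt (hsD ha).1⟩
      obtain ⟨a0, ha0⟩ := hsne
      have hpos : 0 < sSup s := lt_of_lt_of_le (hsD ha0).2.1 (le_csSup hbdd ha0)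
      refine ⟨hsup, hpos, ?_⟩
      by_cases hmem : sSup s ∈ s
      · exact (hsD hmem).2.2
      · have hlim : Order.IsSuccLimit (sSup s) := by
          refine Ordinal.isSuccLimit_iff.mpr ⟨ne_of_gt hpos, Order.isSuccPrelimit_of_succ_lt fun b hb => ?_⟩
          obtain ⟨c, hcs, hbc⟩ := exists_lt_of_lt_csSup ⟨a0, ha0⟩ hb
          have hcle : c ≤ sSup s := le_csSup hbdd hcs
          have h5 : c < sSup s := lt_of_le_of_ne hcle (fun h => hmem (h ▸ hcs))
          exact lt_of_le_of_lt (Order.succ_le_of_lt hbc) h5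
        apply le_antisymm
        · rw [Ordinal.mul_le_iff_of_isSuccLimit hlim]
          intro b hb
          obtain ⟨c, hcs, hbc⟩ := exists_lt_of_lt_csSup ⟨a0, ha0⟩ hb
          calc omega0 * b ≤ omega0 * c := mul_le_mul_right hbc.le _
            _ = c := (hsD hcs).2.2
            _ ≤ sSup s := le_csSup hbdd hcs
        · exact Ordinal.le_mul_right _ omega0_pos
  -- key injectivity
  have key : ∀ x y : t.carrier, t.height x ∈ D → t.height x = t.height y →
      Phi t x (omega0 * t.height x) = Phi t y (omega0 * t.height y) → x = y := by
    intro x y hD hhe hPhi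
    have hPhi' : Phi t x (omega0 * t.height x) = Phi t y (omega0 * t.height x) := by
      rw [hhe]; rw [hhe] at hPhi; exact hPhi
    have hpred : ∀ δ < t.height x, pr t x δ = pr t y δ := by
      intro δ hδ
      apply pred_decode t hPhi' hδ.le (hhe ▸ hδ.le) ?_ (hcount δ (lt_trans hδ hD.1))
      calc omega0 * δ + (num t (pr t x δ) : Ordinal) < omega0 * δ + omega0 :=
            add_lt_add_right (nat_lt_omega0 _) _
        _ = omega0 * Order.succ δ := (Ordinal.mul_succ _ _).symm
        _ ≤ omega0 * t.height x := mul_le_mul_right (Order.succ_le_of_lt hδ) _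
    have hset : {z | t.lt z x} = {z | t.lt z y} := by
      ext z; constructor
      · intro hz
        have h3 : t.height z < t.height x := height_lt t hz
        have h4 := hpred _ h3
        rw [pr_of_lt t hz] at h4
        rw [h4]
        exact pr_lt t (hhe ▸ h3)
      · intro hz
        have h3 : t.height z < t.height x := by
          rw [hhe]; exact height_lt t hz
        have h4 := hpred _ h3
        rw [pr_of_lt t hz] at h4
        rw [← h4]
        exact pr_lt t h3
    exact h2 x y (hDlim _ hD) hhe hset
  -- the map
  set E : {x : t.carrier // t.height x ∈ D} → {s : BinSeq // s ∈ S ∧ s.1 ∈ D} :=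
    fun x => ⟨Phi t x.1 (omega0 * t.height x.1),
      ⟨x.1, omega0 * t.height x.1, le_refl _, rfl⟩,
      by show omega0 * t.height x.1 ∈ D; rw [x.2.2.2]; exact x.2⟩ with hEdef
  have hinj : Function.Injective E := by
    intro a b hab
    have h0 : Phi t a.1 (omega0 * t.height a.1) = Phi t b.1 (omega0 * t.height b.1) :=
      congrArg Subtype.val hab
    have hd : omega0 * t.height a.1 = omega0 * t.height b.1 := congrArg Sigma.fst h0
    exact Subtype.ext (key a.1 b.1 a.2 (le_antisymm ((mul_le_mul_iff_right₀ omega0_pos).mp hd.le) ((mul_le_mul_iff_right₀ omega0_pos).mp hd.ge)) h0)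
  have hsurj : Function.Surjective E := by
    intro s
    obtain ⟨⟨z, γ, hγ, hsval⟩, hdom⟩ := s.2
    have hγD : γ ∈ D := by rw [hsval] at hdom; exact hdom
    have hγz : γ ≤ t.height z := by
      apply (mul_le_mul_iff_right₀ omega0_pos).mp
      rw [hγD.2.2]; exact hγ
    have hw : t.height (pr t z γ) = γ := height_pr t hγz
    refine ⟨⟨pr t z γ, by rw [hw]; exact hγD⟩, ?_⟩
    apply Subtype.ext
    show Phi t (pr t z γ) (omega0 * t.height (pr t z γ)) = s.1
    rw [hw, hγD.2.2, hsval]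
    apply Phi_congr
    intro γ' hγ'
    have hδ : γ' / omega0 ≤ γ := by
      apply le_of_lt
      rw [Ordinal.div_lt omega0_ne_zero, hγD.2.2]
      exact hγ'
    exact pr_pr t hγz hδ
  refine ⟨S, hTree, D, hClub, Equiv.ofBijective E ⟨hinj, hsurj⟩, ?_⟩
  intro x y
  show t.lt x.1 y.1 ↔ BinSeq.ssub (E x).1 (E y).1
  constructor
  · intro hxy
    have hlt : t.height x.1 < t.height y.1 := height_lt t hxy
    refine ⟨(mul_lt_mul_iff_right₀ omega0_pos).mpr hlt, ?_⟩
    show (Phi t y.1 (omega0 * t.height y.1)).restrict (omega0 * t.height x.1) _ =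
      Phi t x.1 (omega0 * t.height x.1)
    show Phi t y.1 (omega0 * t.height x.1) = Phi t x.1 (omega0 * t.height x.1)
    apply Phi_congr
    intro γ' hγ'
    have hδ : γ' / omega0 ≤ t.height x.1 :=
      le_of_lt ((Ordinal.div_lt omega0_ne_zero).mpr hγ')
    exact (pr_eq_of_lt t hxy hδ).symm
  · rintro ⟨hlt, hres⟩
    have hlt' : t.height x.1 < t.height y.1 := (mul_lt_mul_iff_right₀ omega0_pos).mp hlt
    have h6 : Phi t y.1 (omega0 * t.height x.1) = Phi t x.1 (omega0 * t.height x.1) :=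
      (restrict_Phi t y.1 hlt.le).symm.trans hres
    have hhx : t.height x.1 ≤ t.height y.1 := hlt'.le
    have hw : t.height (pr t y.1 (t.height x.1)) = t.height x.1 := height_pr t hhx
    have h7 : Phi t (pr t y.1 (t.height x.1)) (omega0 * t.height x.1) =
        Phi t x.1 (omega0 * t.height x.1) := by
      rw [← h6]
      apply Phi_congr
      intro γ' hγ'
      have hδ : γ' / omega0 ≤ t.height x.1 :=
        le_of_lt ((Ordinal.div_lt omega0_ne_zero).mpr hγ')
      exact pr_pr t hhx hδ
    have h8 : x.1 = pr t y.1 (t.height x.1) := by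
      apply key x.1 (pr t y.1 (t.height x.1)) x.2 hw.symm
      rw [hw]
      exact h7.symm
    rw [h8]
    exact pr_lt t hlt'
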